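/- arXiv:2106.14147 — 3 statements merged into one kernel-verified Lean document; each statement's English description precedes it below -/
import Mathlib

section
/- Let f be an automorphism of the free group F_n that induces the identity on the abelianization F_n^{ab}. Then: (i) for every x ∈ F_n, the element f(x)·x⁻¹ lies in the commutator subgroup C = [F_n, F_n]; and (ii) the map F_n → C/D sending x to the coset of f(x)·x⁻¹, where D = [F_n, [F_n, F_n]], is a group homomorphism. -/
abbrev FG (n : ℕ) := FreeGroup (Fin n)

/-- `D = [F_n, [F_n, F_n]]`, the subgroup generated by commutators of elements of `F_n`
with elements of the commutator subgroup. -/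
def DD (n : ℕ) : Subgroup (FG n) := ⁅(⊤ : Subgroup (FG n)), commutator (FG n)⁆

instance DD_normal (n : ℕ) : (DD n).Normal :=
  inferInstanceAs (Subgroup.Normal ⁅(⊤ : Subgroup (FG n)), commutator (FG n)⁆)

/-- The quotient group `C/D` where `C = [F_n, F_n]` and `D = [F_n, [F_n, F_n]]`. -/
abbrev CmodD (n : ℕ) : Type :=
  commutator (FG n) ⧸ (DD n).subgroupOf (commutator (FG n))

/-- The projection `C → C/D`. -/
def toCmodD (n : ℕ) (c : commutator (FG n)) : CmodD n := QuotientGroup.mk c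

/-- Let `f` be an automorphism of the free group `F_n` inducing the identity on the
abelianization. Then (i) `f(x)·x⁻¹` lies in the commutator subgroup `C = [F_n, F_n]`
for every `x`, and (ii) the map `F_n → C/D`, `x ↦ f(x)·x⁻¹ mod D`, where
`D = [F_n, [F_n, F_n]]`, is a group homomorphism. -/
theorem johnson_hom_welldef_and_hom (n : ℕ) (f : MulAut (FG n))
    (hf : ∀ x : FG n, Abelianization.of (f x) = Abelianization.of x) :
    ∃ hC : ∀ x : FG n, f x * x⁻¹ ∈ commutator (FG n),
      ∀ x y : FG n,
        toCmodD n ⟨f (x * y) * (x * y)⁻¹, hC (x * y)⟩ =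
          toCmodD n ⟨f x * x⁻¹, hC x⟩ * toCmodD n ⟨f y * y⁻¹, hC y⟩ := by
  have hC : ∀ x : FG n, f x * x⁻¹ ∈ commutator (FG n) := by
    intro x
    have : (QuotientGroup.mk (f x * x⁻¹) : Abelianization (FG n)) = 1 := by
      have h1 : (QuotientGroup.mk (f x) : Abelianization (FG n)) =
          QuotientGroup.mk x := hf x
      rw [QuotientGroup.mk_mul, h1, QuotientGroup.mk_inv, mul_inv_cancel]
    exact (QuotientGroup.eq_one_iff _).mp this
  refine ⟨hC, fun x y => ?_⟩
  have key : (⟨f x * x⁻¹, hC x⟩ : commutator (FG n)) * ⟨f y * y⁻¹, hC y⟩ =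
      ⟨f x * x⁻¹ * (f y * y⁻¹), (commutator (FG n)).mul_mem (hC x) (hC y)⟩ := rfl
  rw [toCmodD, toCmodD, toCmodD, ← QuotientGroup.mk_mul, key, QuotientGroup.eq]
  show (f (x * y) * (x * y)⁻¹)⁻¹ * (f x * x⁻¹ * (f y * y⁻¹)) ∈ DD n
  have hfxy : f (x * y) = f x * f y := map_mul f x y
  have : (f (x * y) * (x * y)⁻¹)⁻¹ * (f x * x⁻¹ * (f y * y⁻¹)) =
      @Bracket.bracket _ _ commutatorElement x (f y * y⁻¹)⁻¹ := by
    rw [commutatorElement_def]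
    rw [hfxy]; group
  rw [this]
  exact Subgroup.commutator_mem_commutator (Subgroup.mem_top x)
    ((commutator (FG n)).inv_mem (hC y))
end

section
/- Let f be an automorphism of the free group F_n that induces the identity on the abelianization F_n^{ab}. If x, y ∈ F_n satisfy x⁻¹y ∈ [F_n, F_n], then f(x)·x⁻¹ and f(y)·y⁻¹ represent the same coset of D = [F_n, [F_n, F_n]]; equivalently, for every c ∈ [F_n, F_n], the element f(c)·c⁻¹ lies in [F_n, [F_n, F_n]]. (Hence the induced map H_1(F_n) → [F_n,F_n]/[F_n,[F_n,F_n]] is well defined.) -/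
/-- Let `f` be an automorphism of the free group `F_n` inducing the identity on the
abelianization. If `x⁻¹y ∈ [F_n, F_n]`, then `f(x)·x⁻¹` and `f(y)·y⁻¹` represent the
same coset of `D = [F_n, [F_n, F_n]]`; equivalently, `f(c)·c⁻¹ ∈ D` for every
`c ∈ [F_n, F_n]`. Hence the induced map `H₁(F_n) → [F_n,F_n]/D` is well defined. -/
theorem johnson_hom_factors (n : ℕ) (f : MulAut (FG n))
    (hf : ∀ x : FG n, Abelianization.of (f x) = Abelianization.of x) :
    (∀ x y : FG n, x⁻¹ * y ∈ commutator (FG n) →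
        (f x * x⁻¹) * (f y * y⁻¹)⁻¹ ∈ DD n) ∧
    (∀ c ∈ commutator (FG n), f c * c⁻¹ ∈ DD n) := by
  haveI hDnorm : (DD n).Normal := by unfold DD; infer_instance
  -- x⁻¹ * f x lies in the commutator subgroup
  have hcomm : ∀ x : FG n, x⁻¹ * f x ∈ commutator (FG n) := by
    intro x
    have : Abelianization.of (x⁻¹ * f x) = 1 := by
      rw [map_mul, map_inv, hf, inv_mul_cancel]
    exact (QuotientGroup.eq_one_iff _).mp this
  -- elements of the commutator subgroup are central mod DD
  have hswap : ∀ a ∈ commutator (FG n), ∀ g : FG n,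
      ((a * g : FG n) : FG n ⧸ DD n) = ((g * a : FG n) : FG n ⧸ DD n) := by
    intro a ha g
    rw [QuotientGroup.eq]
    have key : (a * g)⁻¹ * (g * a) = @Bracket.bracket (FG n) (FG n) commutatorElement g⁻¹ a⁻¹ := by
      rw [commutatorElement_def]; group
    rw [key]
    exact Subgroup.commutator_mem_commutator (Subgroup.mem_top g⁻¹)
      ((commutator (FG n)).inv_mem ha)
  -- the "Johnson cocycle" mod DD is a homomorphism
  have hmul : ∀ x y : FG n,
      (((x * y)⁻¹ * f (x * y) : FG n) : FG n ⧸ DD n) =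
        ((x⁻¹ * f x : FG n) : FG n ⧸ DD n) * ((y⁻¹ * f y : FG n) : FG n ⧸ DD n) := by
    intro x y
    have h1 : ((x * y)⁻¹ * f (x * y) : FG n) = (y⁻¹ * (x⁻¹ * f x)) * f y := by
      rw [map_mul]; group
    rw [h1, QuotientGroup.mk_mul, ← hswap _ (hcomm x) y⁻¹, ← QuotientGroup.mk_mul,
      show ((x⁻¹ * f x) * y⁻¹ * f y : FG n) = (x⁻¹ * f x) * (y⁻¹ * f y) from by group,
      QuotientGroup.mk_mul]
  set ε : FG n →* FG n ⧸ DD n :=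
    MonoidHom.mk' (fun x => ((x⁻¹ * f x : FG n) : FG n ⧸ DD n)) hmul with hε
  -- ε vanishes on the commutator subgroup
  have hker : commutator (FG n) ≤ ε.ker := by
    rw [commutator_def, Subgroup.commutator_le]
    intro g _ h _
    rw [MonoidHom.mem_ker, map_commutatorElement]
    apply commutatorElement_eq_one_iff_commute.mpr
    show ε g * ε h = ε h * ε g
    have : ε g * ε h = (((g⁻¹ * f g) * (h⁻¹ * f h) : FG n) : FG n ⧸ DD n) := rfl
    rw [this, hswap _ (hcomm g) (h⁻¹ * f h)]
    rfl
  -- second statement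
  have part2 : ∀ c ∈ commutator (FG n), f c * c⁻¹ ∈ DD n := by
    intro c hc
    have h1 : ε c = 1 := hker hc
    have h2 : (c⁻¹ * f c : FG n) ∈ DD n := (QuotientGroup.eq_one_iff _).mp h1
    have h3 := hDnorm.conj_mem _ h2 c
    have : c * (c⁻¹ * f c) * c⁻¹ = f c * c⁻¹ := by group
    rwa [this] at h3
  refine ⟨?_, part2⟩
  intro x y h
  have h2 : f (x⁻¹ * y) * (x⁻¹ * y)⁻¹ ∈ DD n := part2 _ h
  have h3 : ((x⁻¹ * y) * (f (x⁻¹ * y))⁻¹ : FG n) ∈ DD n := by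
    have := (DD n).inv_mem h2
    simpa using this
  have h4 := hDnorm.conj_mem _ h3 (f x)
  have h5 : f x * ((x⁻¹ * y) * (f (x⁻¹ * y))⁻¹) * (f x)⁻¹ =
      (f x * x⁻¹) * (f y * y⁻¹)⁻¹ := by
    rw [map_mul, map_inv]; group
  rwa [h5] at h4
end

section
/- For every n ≥ 1, the quotient group [F_n, F_n]/[F_n, [F_n, F_n]] is abelian and is free abelian of rank n(n−1)/2, with free abelian basis the cosets of the commutators [x_i, x_j] for 1 ≤ i < j ≤ n. In particular, [F_n, F_n]/[F_n, [F_n, F_n]] ≅ ℤ^{n(n−1)/2} ≅ Λ²ℤⁿ. -/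
open scoped commutatorElement in
/-- The coset of the commutator `[x_i, x_j]` in `[F_n, F_n]/[F_n, [F_n, F_n]]`,
for a pair of indices `i < j`. -/
def basisElt (n : ℕ) (p : {q : Fin n × Fin n // q.1 < q.2}) : CmodD n :=
  QuotientGroup.mk
    ⟨⁅FreeGroup.of p.1.1, FreeGroup.of p.1.2⁆,
      Subgroup.commutator_mem_commutator (Subgroup.mem_top _) (Subgroup.mem_top _)⟩

namespace CQFA

open scoped commutatorElement

abbrev Pairs (n : ℕ) := {q : Fin n × Fin n // q.1 < q.2}

variable {n : ℕ}

lemma mem_comm (g h : FG n) : ⁅g, h⁆ ∈ commutator (FG n) :=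
  Subgroup.commutator_mem_commutator (Subgroup.mem_top _) (Subgroup.mem_top _)

lemma mem_DD (g : FG n) {h : FG n} (hh : h ∈ commutator (FG n)) : ⁅g, h⁆ ∈ DD n :=
  Subgroup.commutator_mem_commutator (Subgroup.mem_top _) hh

/-- The class of `⁅g, h⁆` in `CmodD n`. -/
def B (g h : FG n) : CmodD n := QuotientGroup.mk ⟨⁅g, h⁆, mem_comm g h⟩

lemma mk_mul {u v : FG n} (hu : u ∈ commutator (FG n)) (hv : v ∈ commutator (FG n)) :
    (QuotientGroup.mk ⟨u * v, mul_mem hu hv⟩ : CmodD n)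
      = QuotientGroup.mk ⟨u, hu⟩ * QuotientGroup.mk ⟨v, hv⟩ := rfl

lemma mk_inv {u : FG n} (hu : u ∈ commutator (FG n)) :
    (QuotientGroup.mk ⟨u⁻¹, inv_mem hu⟩ : CmodD n) = (QuotientGroup.mk ⟨u, hu⟩)⁻¹ := rfl

lemma mk_eq {u v : FG n} (hu : u ∈ commutator (FG n)) (hv : v ∈ commutator (FG n))
    (h : u * v⁻¹ ∈ DD n) :
    (QuotientGroup.mk ⟨u, hu⟩ : CmodD n) = QuotientGroup.mk ⟨v, hv⟩ := by
  rw [QuotientGroup.eq, Subgroup.mem_subgroupOf]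
  show (u : FG n)⁻¹ * v ∈ DD n
  have h2 := (DD_normal n).conj_mem _ ((DD n).inv_mem h) u⁻¹
  simpa [mul_assoc, mul_inv_rev] using h2

lemma B_mul_left (g g' h : FG n) : B (g * g') h = B g' h * B g h := by
  unfold B
  rw [← mk_mul (mem_comm g' h) (mem_comm g h)]
  apply mk_eq
  have key : ⁅g * g', h⁆ * (⁅g', h⁆ * ⁅g, h⁆)⁻¹ = ⁅g, ⁅g', h⁆⁆ := by
    simp only [commutatorElement_def]; group
  rw [key]
  exact mem_DD g (mem_comm g' h)

lemma B_mul_right (g h h' : FG n) : B g (h * h') = B g h * B g h' := by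
  unfold B
  rw [← mk_mul (mem_comm g h) (mem_comm g h')]
  apply mk_eq
  have key : ⁅g, h * h'⁆ * (⁅g, h⁆ * ⁅g, h'⁆)⁻¹ = ⁅g, h⁆ * ⁅h, ⁅g, h'⁆⁆ * ⁅g, h⁆⁻¹ := by
    simp only [commutatorElement_def]; group
  rw [key]
  exact (DD_normal n).conj_mem _ (mem_DD h (mem_comm g h')) ⁅g, h⁆

lemma B_one_left (h : FG n) : B 1 h = 1 := by
  unfold B
  rw [QuotientGroup.eq_one_iff, Subgroup.mem_subgroupOf]
  show ⁅(1 : FG n), h⁆ ∈ DD n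
  simpa [commutatorElement_one_left] using (DD n).one_mem

lemma B_one_right (g : FG n) : B g 1 = 1 := by
  unfold B
  rw [QuotientGroup.eq_one_iff, Subgroup.mem_subgroupOf]
  show ⁅g, (1 : FG n)⁆ ∈ DD n
  simpa [commutatorElement_one_right] using (DD n).one_mem

lemma B_inv_left (g h : FG n) : B g⁻¹ h = (B g h)⁻¹ := by
  have h1 : B g h * B g⁻¹ h = 1 := by
    rw [← B_mul_left, inv_mul_cancel, B_one_left]
  exact eq_inv_of_mul_eq_one_right h1

lemma B_inv_right (g h : FG n) : B g h⁻¹ = (B g h)⁻¹ := by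
  have h1 : B g h * B g h⁻¹ = 1 := by
    rw [← B_mul_right, mul_inv_cancel, B_one_right]
  exact eq_inv_of_mul_eq_one_right h1

lemma B_swap (g h : FG n) : B h g = (B g h)⁻¹ := by
  unfold B
  rw [← mk_inv (mem_comm g h)]
  exact congrArg _ (Subtype.ext (commutatorElement_inv g h).symm)

lemma CmodD_comm (a b : CmodD n) : a * b = b * a := by
  obtain ⟨x, rfl⟩ := QuotientGroup.mk_surjective a
  obtain ⟨y, rfl⟩ := QuotientGroup.mk_surjective b
  rw [← QuotientGroup.mk_mul, ← QuotientGroup.mk_mul, QuotientGroup.eq, Subgroup.mem_subgroupOf]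
  have key : (((x * y)⁻¹ * (y * x) : commutator (FG n)) : FG n)
      = ⁅((y : FG n))⁻¹, ((x : FG n))⁻¹⁆ := by
    simp [commutatorElement_def, mul_assoc]
  rw [key]
  exact mem_DD _ (inv_mem x.2)

abbrev S (n : ℕ) : Subgroup (CmodD n) := Subgroup.closure (Set.range (basisElt n))

lemma B_of_mem (i j : Fin n) : B (FreeGroup.of i) (FreeGroup.of j) ∈ S n := by
  rcases lt_trichotomy i j with h | rfl | h
  · exact Subgroup.subset_closure ⟨⟨(i, j), h⟩, rfl⟩
  · have h1 : B (FreeGroup.of i) (FreeGroup.of i) = 1 := by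
      unfold B
      rw [QuotientGroup.eq_one_iff, Subgroup.mem_subgroupOf]
      show ⁅FreeGroup.of i, FreeGroup.of i⁆ ∈ DD n
      have : ⁅FreeGroup.of i, FreeGroup.of i⁆ = (1 : FG n) := by
        rw [commutatorElement_def]; group
      rw [this]; exact (DD n).one_mem
    rw [h1]; exact one_mem _
  · rw [B_swap]
    exact inv_mem (Subgroup.subset_closure ⟨⟨(j, i), h⟩, rfl⟩)

lemma B_mem (g h : FG n) : B g h ∈ S n := by
  induction g using FreeGroup.induction_on generalizing h with
  | C1 => rw [B_one_left]; exact one_mem _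
  | of i =>
    induction h using FreeGroup.induction_on with
    | C1 => rw [B_one_right]; exact one_mem _
    | of j => exact B_of_mem i j
    | inv_of j hj => rw [B_inv_right]; exact inv_mem hj
    | mul y z hy hz => rw [B_mul_right]; exact mul_mem hy hz
  | inv_of i hi => rw [B_inv_left]; exact inv_mem (hi h)
  | mul x y hx hy => rw [B_mul_left]; exact mul_mem (hy h) (hx h)

lemma S_top : S n = ⊤ := by
  rw [Subgroup.eq_top_iff']
  intro a
  obtain ⟨z, rfl⟩ := QuotientGroup.mk_surjective a
  obtain ⟨x, hx⟩ := z
  have hx' : x ∈ Subgroup.closure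
      {g : FG n | ∃ g₁ ∈ (⊤ : Subgroup (FG n)), ∃ g₂ ∈ (⊤ : Subgroup (FG n)), ⁅g₁, g₂⁆ = g} := by
    rw [← Subgroup.commutator_def]; exact hx
  revert hx
  induction hx' using Subgroup.closure_induction with
  | mem w hw =>
    obtain ⟨g₁, -, g₂, -, rfl⟩ := hw
    intro hmem
    exact B_mem g₁ g₂
  | one =>
    intro h1
    have : (⟨(1 : FG n), h1⟩ : commutator (FG n)) = 1 := rfl
    rw [this, QuotientGroup.mk_one]
    exact one_mem _
  | mul w₁ w₂ hw₁ hw₂ ih₁ ih₂ =>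
    intro hmem
    have hc₁ : w₁ ∈ commutator (FG n) := by rw [commutator, Subgroup.commutator_def]; exact hw₁
    have hc₂ : w₂ ∈ commutator (FG n) := by rw [commutator, Subgroup.commutator_def]; exact hw₂
    have : (⟨w₁ * w₂, hmem⟩ : commutator (FG n)) = ⟨w₁, hc₁⟩ * ⟨w₂, hc₂⟩ := rfl
    rw [this, QuotientGroup.mk_mul]
    exact mul_mem (ih₁ hc₁) (ih₂ hc₂)
  | inv w hw ih =>
    intro hmem
    have hc : w ∈ commutator (FG n) := by rw [commutator, Subgroup.commutator_def]; exact hw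
    have : (⟨w⁻¹, hmem⟩ : commutator (FG n)) = (⟨w, hc⟩)⁻¹ := rfl
    rw [this, QuotientGroup.mk_inv]
    exact inv_mem (ih hc)

lemma hom_ext {A : Type*} [Group A] {φ₁ φ₂ : CmodD n →* A}
    (h : ∀ p, φ₁ (basisElt n p) = φ₂ (basisElt n p)) : φ₁ = φ₂ := by
  refine MonoidHom.ext fun a => ?_
  have ha : a ∈ S n := by rw [S_top]; trivial
  induction ha using Subgroup.closure_induction with
  | mem x hx => obtain ⟨p, rfl⟩ := hx; exact h p
  | one => simp
  | mul x y _ _ hx hy => simp [map_mul, hx, hy]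
  | inv x _ hx => simp [map_inv, hx]

/-! ### The Heisenberg-type group used to construct homomorphisms out of `CmodD n`. -/

section HeisSec

variable (A : Type) [CommGroup A]

/-- The bilinear "cocycle". -/
def cc (g : Pairs n → A) (a b : Fin n → ℤ) : A :=
  ∏ p : Pairs n, g p ^ (a p.1.1 * b p.1.2)

variable (g : Pairs n → A)

lemma cc_add_left (a a' b : Fin n → ℤ) : cc A g (a + a') b = cc A g a b * cc A g a' b := by
  simp [cc, add_mul, zpow_add, Finset.prod_mul_distrib]

lemma cc_add_right (a b b' : Fin n → ℤ) : cc A g a (b + b') = cc A g a b * cc A g a b' := by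
  simp [cc, mul_add, zpow_add, Finset.prod_mul_distrib]

lemma cc_zero_left (b : Fin n → ℤ) : cc A g 0 b = 1 := by simp [cc]

lemma cc_zero_right (a : Fin n → ℤ) : cc A g a 0 = 1 := by simp [cc]

lemma cc_neg_left (a b : Fin n → ℤ) : cc A g (-a) b = (cc A g a b)⁻¹ := by
  simp [cc, zpow_neg, Finset.prod_inv_distrib]

lemma cc_neg_right (a b : Fin n → ℤ) : cc A g a (-b) = (cc A g a b)⁻¹ := by
  simp [cc, zpow_neg, Finset.prod_inv_distrib]

end HeisSec

/-- The free class-2 nilpotent-type group on `ℤ^n` with commutator values in `A`. -/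
@[ext]
structure Heis (n : ℕ) (A : Type) (g : {q : Fin n × Fin n // q.1 < q.2} → A) where
  v : Fin n → ℤ
  t : A

namespace Heis

variable {A : Type} [CommGroup A] {g : Pairs n → A}

instance : Mul (Heis n A g) := ⟨fun x y => ⟨x.v + y.v, x.t * y.t * cc A g x.v y.v⟩⟩
instance : One (Heis n A g) := ⟨⟨0, 1⟩⟩
instance : Inv (Heis n A g) := ⟨fun x => ⟨-x.v, x.t⁻¹ * cc A g x.v x.v⟩⟩

@[simp] lemma mul_v (x y : Heis n A g) : (x * y).v = x.v + y.v := rfl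
@[simp] lemma mul_t (x y : Heis n A g) : (x * y).t = x.t * y.t * cc A g x.v y.v := rfl
@[simp] lemma one_v : (1 : Heis n A g).v = 0 := rfl
@[simp] lemma one_t : (1 : Heis n A g).t = 1 := rfl
@[simp] lemma inv_v (x : Heis n A g) : x⁻¹.v = -x.v := rfl
@[simp] lemma inv_t (x : Heis n A g) : x⁻¹.t = x.t⁻¹ * cc A g x.v x.v := rfl

instance : Group (Heis n A g) :=
  Group.ofLeftAxioms
    (fun x y z => by
      ext i
      · simp [add_assoc]
      · simp [cc_add_left, cc_add_right, mul_assoc, mul_comm, mul_left_comm])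
    (fun x => by
      ext i
      · simp
      · simp [cc_zero_left])
    (fun x => by
      ext i
      · simp
      · simp [cc_neg_left, mul_assoc, mul_comm, mul_left_comm])

lemma central {y : Heis n A g} (hy : y.v = 0) (x : Heis n A g) : x * y = y * x := by
  ext i
  · simp [add_comm]
  · simp [hy, cc_zero_left, cc_zero_right, mul_comm]

lemma comm_t (u w : Heis n A g) :
    (⁅u, w⁆).t = cc A g u.v w.v * (cc A g w.v u.v)⁻¹ := by
  simp only [commutatorElement_def, mul_t, mul_v, inv_t, inv_v, cc_add_left, cc_add_right,
    cc_neg_left, cc_neg_right]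
  apply Additive.ofMul.injective
  simp only [ofMul_mul, ofMul_inv]
  abel

end Heis

section PhiSec

variable (A : Type) [CommGroup A] (g : Pairs n → A)

/-- The homomorphism `F_n → Heis` sending `x_i` to `(e_i, 1)`. -/
def phiA : FG n →* Heis n A g := FreeGroup.lift fun i => ⟨Pi.single i 1, 1⟩

lemma phiA_v_eq_zero {z : FG n} (hz : z ∈ commutator (FG n)) :
    ((phiA A g) z).v = 0 := by
  rw [commutator, Subgroup.commutator_def] at hz
  induction hz using Subgroup.closure_induction with
  | mem w hw =>
    obtain ⟨g₁, -, g₂, -, rfl⟩ := hw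
    rw [map_commutatorElement]
    simp [commutatorElement_def]
  | one => simp
  | mul x y _ _ hx hy => simp [map_mul, hx, hy]
  | inv x _ hx => simp [map_inv, hx]

lemma DD_le_ker : DD n ≤ (phiA A g).ker := by
  unfold DD
  refine Subgroup.commutator_le.mpr ?_
  intro g₁ _ g₂ hg₂
  rw [MonoidHom.mem_ker, map_commutatorElement, commutatorElement_eq_one_iff_mul_comm]
  exact Heis.central (phiA_v_eq_zero A g hg₂) _

/-- `ψ₀ : [F_n, F_n] → A`, the `t`-component of `phiA`. -/
def psi0 : commutator (FG n) →* A where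
  toFun z := ((phiA A g) ↑z).t
  map_one' := by simp
  map_mul' z w := by
    simp [map_mul, phiA_v_eq_zero A g z.2, cc_zero_left]

/-- The induced homomorphism `CmodD n → A`. -/
def psi : CmodD n →* A :=
  QuotientGroup.lift _ (psi0 A g) (by
    intro z hz
    rw [Subgroup.mem_subgroupOf] at hz
    have h1 : phiA A g ↑z = 1 := DD_le_ker A g hz
    simp [psi0, h1])

lemma cc_single {i j : Fin n} (h : i < j) :
    cc A g (Pi.single i 1) (Pi.single j 1) = g ⟨(i, j), h⟩ := by
  unfold cc
  rw [Fintype.prod_eq_single ⟨(i, j), h⟩]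
  · simp
  · intro q hq
    have hne : q.1.1 ≠ i ∨ q.1.2 ≠ j := by
      by_contra hc
      push_neg at hc
      exact hq (Subtype.ext (Prod.ext hc.1 hc.2))
    rcases hne with h' | h' <;> simp [Pi.single_apply, h']

lemma cc_single_rev {i j : Fin n} (h : i < j) :
    cc A g (Pi.single j 1) (Pi.single i 1) = 1 := by
  unfold cc
  apply Finset.prod_eq_one
  intro q _
  have hne : q.1.1 ≠ j ∨ q.1.2 ≠ i := by
    by_contra hc
    push_neg at hc
    have hq := q.2
    rw [hc.1, hc.2] at hq
    exact absurd hq (not_lt.mpr h.le)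
  rcases hne with h' | h' <;> simp [Pi.single_apply, h']

lemma psi_basis (p : Pairs n) : psi A g (basisElt n p) = g p := by
  show psi0 A g ⟨⁅FreeGroup.of p.1.1, FreeGroup.of p.1.2⁆, mem_comm _ _⟩ = g p
  show ((phiA A g) ⁅FreeGroup.of p.1.1, FreeGroup.of p.1.2⁆).t = g p
  rw [map_commutatorElement]
  have h1 : phiA A g (FreeGroup.of p.1.1) = ⟨Pi.single p.1.1 1, 1⟩ := FreeGroup.lift_apply_of
  have h2 : phiA A g (FreeGroup.of p.1.2) = ⟨Pi.single p.1.2 1, 1⟩ := FreeGroup.lift_apply_of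
  rw [h1, h2, Heis.comm_t]
  show cc A g (Pi.single p.1.1 1) (Pi.single p.1.2 1)
      * (cc A g (Pi.single p.1.2 1) (Pi.single p.1.1 1))⁻¹ = g p
  rw [cc_single A g p.2, cc_single_rev A g p.2]
  simp

end PhiSec

/-- Counting the pairs. -/
def pairsEquiv (n : ℕ) : Pairs n ≃ Σ j : Fin n, Fin j.val where
  toFun p := ⟨p.1.2, ⟨p.1.1, p.2⟩⟩
  invFun q := ⟨(⟨q.2.1, lt_trans q.2.2 q.1.2⟩, q.1), q.2.2⟩
  left_inv := by rintro ⟨⟨i, j⟩, h⟩; rfl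
  right_inv := by rintro ⟨j, i⟩; rfl

lemma card_pairs (n : ℕ) : Fintype.card (Pairs n) = n * (n - 1) / 2 := by
  rw [Fintype.card_congr (pairsEquiv n)]
  rw [Fintype.card_sigma]
  simp only [Fintype.card_fin]
  rw [show (∑ x : Fin n, (x : ℕ)) = ∑ i ∈ Finset.range n, i from
    Fin.sum_univ_eq_sum_range (fun i => i) n]
  exact Finset.sum_range_id n

instance instCommGroupCmodD : CommGroup (CmodD n) :=
  { (inferInstance : Group (CmodD n)) with mul_comm := CmodD_comm }

/-- The standard basis family in `Multiplicative (Pairs n → ℤ)`. -/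
def ggA (n : ℕ) : Pairs n → Multiplicative (Pairs n → ℤ) := fun p =>
  Multiplicative.ofAdd (Pi.single p (1 : ℤ))

/-- The inverse homomorphism `Multiplicative (Pairs n → ℤ) → CmodD n`. -/
def chi (n : ℕ) : Multiplicative (Pairs n → ℤ) →* CmodD n where
  toFun x := ∏ p : Pairs n, basisElt n p ^ (Multiplicative.toAdd x p)
  map_one' := by simp
  map_mul' x y := by
    simp [toAdd_mul, Pi.add_apply, zpow_add, Finset.prod_mul_distrib]

lemma chi_psi (n : ℕ) :
    (chi n).comp (psi (Multiplicative (Pairs n → ℤ)) (ggA n)) = MonoidHom.id (CmodD n) := by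
  apply hom_ext
  intro p
  rw [MonoidHom.comp_apply, MonoidHom.id_apply, psi_basis]
  show ∏ q : Pairs n, basisElt n q ^ (Multiplicative.toAdd (ggA n p) q) = basisElt n p
  rw [Fintype.prod_eq_single p]
  · simp [ggA]
  · intro q hq
    simp [ggA, Pi.single_apply, hq]

lemma psi_chi (n : ℕ) :
    (psi (Multiplicative (Pairs n → ℤ)) (ggA n)).comp (chi n)
      = MonoidHom.id (Multiplicative (Pairs n → ℤ)) := by
  refine MonoidHom.ext fun x => ?_
  rw [MonoidHom.comp_apply, MonoidHom.id_apply]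
  show psi _ (ggA n) (∏ p : Pairs n, basisElt n p ^ (Multiplicative.toAdd x p)) = x
  rw [map_prod]
  simp only [map_zpow, psi_basis]
  apply Multiplicative.toAdd.injective
  rw [toAdd_prod]
  funext q
  simp only [Finset.sum_apply, toAdd_zpow, ggA, toAdd_ofAdd, Pi.smul_apply,
    Pi.single_apply, smul_eq_mul, mul_ite, mul_one, mul_zero]
  rw [Finset.sum_ite_eq Finset.univ q]
  simp

/-- The isomorphism with the free abelian group. -/
noncomputable def theIso (n : ℕ) : CmodD n ≃* Multiplicative (Fin (n * (n - 1) / 2) → ℤ) :=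
  (MonoidHom.toMulEquiv (psi (Multiplicative (Pairs n → ℤ)) (ggA n)) (chi n)
    (chi_psi n) (psi_chi n)).trans
    (AddEquiv.toMultiplicative
      (AddEquiv.arrowCongr (Fintype.equivFinOfCardEq (card_pairs n)) (AddEquiv.refl ℤ)))

end CQFA

open CQFA in
/-- For every `n ≥ 1`, the quotient `[F_n, F_n]/[F_n, [F_n, F_n]]` is abelian and is
free abelian with basis the cosets of the commutators `[x_i, x_j]` for `i < j`
(expressed by the universal property of the free abelian group on this family);
in particular it is isomorphic to `ℤ^{n(n−1)/2}`. -/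
theorem commutator_quotient_free_abelian (n : ℕ) (hn : 1 ≤ n) :
    (∀ a b : CmodD n, a * b = b * a) ∧
    (∀ (A : Type) [CommGroup A] (g : {q : Fin n × Fin n // q.1 < q.2} → A),
        ∃! φ : CmodD n →* A, ∀ p, φ (basisElt n p) = g p) ∧
    Nonempty (CmodD n ≃* Multiplicative (Fin (n * (n - 1) / 2) → ℤ)) := by
  refine ⟨CmodD_comm, ?_, ⟨theIso n⟩⟩
  intro A instA g
  refine ⟨psi A g, fun p => psi_basis A g p, ?_⟩
  intro φ' hφ'
  apply hom_ext
  intro p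
  rw [hφ' p, psi_basis]
end
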